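/- Suppose 1 < q < 2 and 0 < b < q−1, or q > 2 and b > q−1. Then the function ψ(k) := 1 + b·k^q − b·k^{q−2} − k^{2q−2} has exactly one zero k_b in the open interval (0,1). -/

import Mathlib

open Real Set Filter Topology

namespace PsiAux

noncomputable def G (p k : ℝ) : ℝ := (k ^ (1 - p) - k ^ (1 + p)) / (1 - k ^ 2)

noncomputable def phi (p k : ℝ) : ℝ :=
  (1 - p) * (1 - k ^ (2 + 2 * p)) - (1 + p) * (k ^ (2 * p) - k ^ 2)

noncomputable def mm (p k : ℝ) : ℝ := (1 - p) * k ^ (2 * p) + p * k ^ (2 * p - 2)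

lemma two_rpow {k : ℝ} : k ^ (2:ℝ) = k ^ 2 := by
  rw [show (2:ℝ) = ((2:ℕ):ℝ) by norm_num, rpow_natCast]

lemma hasDerivAt_mm (p : ℝ) {k : ℝ} (hk : 0 < k) :
    HasDerivAt (mm p) (2*p*(1-p)*k^(2*p-3)*(k^2-1)) k := by
  have h1 := (Real.hasDerivAt_rpow_const (x := k) (p := 2*p) (Or.inl hk.ne')).const_mul (1-p)
  have h2 := (Real.hasDerivAt_rpow_const (x := k) (p := 2*p-2) (Or.inl hk.ne')).const_mul p
  have h := h1.add h2
  refine h.congr_deriv ?_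
  have e1 : k ^ (2*p-1) = k^(2*p-3) * k^2 := by
    rw [show 2*p-1 = (2*p-3) + 2 by ring, rpow_add hk, two_rpow]
  have e2 : k ^ (2*p-2-1) = k^(2*p-3) := by rw [show 2*p-2-1 = 2*p-3 by ring]
  rw [e1, e2]; ring

lemma mm_one (p : ℝ) : mm p 1 = 1 := by simp [mm]

lemma cont_mm (p : ℝ) : ContinuousOn (mm p) (Ioc 0 1) := by
  intro x hx
  have h1 : ContinuousAt (fun y : ℝ => y ^ (2*p)) x :=
    Real.continuousAt_rpow_const x _ (Or.inl hx.1.ne')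
  have h2 : ContinuousAt (fun y : ℝ => y ^ (2*p-2)) x :=
    Real.continuousAt_rpow_const x _ (Or.inl hx.1.ne')
  exact ((continuousAt_const.mul h1).add (continuousAt_const.mul h2)).continuousWithinAt

lemma mm_gt_one {p : ℝ} (hp0 : 0 < p) (hp1 : p < 1) {k : ℝ} (hk : k ∈ Ioo (0:ℝ) 1) :
    1 < mm p k := by
  have anti : StrictAntiOn (mm p) (Ioc 0 1) := by
    apply strictAntiOn_of_deriv_neg (convex_Ioc 0 1) (cont_mm p)
    intro x hx
    rw [interior_Ioc] at hx
    rw [(hasDerivAt_mm p hx.1).deriv]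
    have h1 : (0:ℝ) < x ^ (2*p-3) := rpow_pos_of_pos hx.1 _
    have hpos : 0 < 2*p*(1-p)*x^(2*p-3) :=
      mul_pos (mul_pos (by linarith) (by linarith)) h1
    exact mul_neg_of_pos_of_neg hpos (by nlinarith [hx.1, hx.2])
  have := anti (mem_Ioc.2 ⟨hk.1, hk.2.le⟩) (mem_Ioc.2 ⟨one_pos, le_refl 1⟩) hk.2
  rwa [mm_one] at this

lemma mm_lt_one {p : ℝ} (hp1 : 1 < p) {k : ℝ} (hk : k ∈ Ioo (0:ℝ) 1) :
    mm p k < 1 := by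
  have mono : StrictMonoOn (mm p) (Ioc 0 1) := by
    apply strictMonoOn_of_deriv_pos (convex_Ioc 0 1) (cont_mm p)
    intro x hx
    rw [interior_Ioc] at hx
    rw [(hasDerivAt_mm p hx.1).deriv]
    have h1 : (0:ℝ) < x ^ (2*p-3) := rpow_pos_of_pos hx.1 _
    have hneg : 2*p*(1-p)*x^(2*p-3) < 0 :=
      mul_neg_of_neg_of_pos (mul_neg_of_pos_of_neg (by linarith) (by linarith)) h1
    exact mul_pos_of_neg_of_neg hneg (by nlinarith [hx.1, hx.2])
  have := mono (mem_Ioc.2 ⟨hk.1, hk.2.le⟩) (mem_Ioc.2 ⟨one_pos, le_refl 1⟩) hk.2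
  rwa [mm_one] at this

lemma hasDerivAt_phi (p : ℝ) {k : ℝ} (hk : 0 < k) :
    HasDerivAt (phi p) (2*(1+p)*k*(1 - mm p k)) k := by
  have h1 := ((Real.hasDerivAt_rpow_const (x := k) (p := 2+2*p)
    (Or.inl hk.ne')).const_sub 1).const_mul (1-p)
  have h2 := ((Real.hasDerivAt_rpow_const (x := k) (p := 2*p)
    (Or.inl hk.ne')).sub (hasDerivAt_pow 2 k)).const_mul (1+p)
  have h := h1.sub h2
  refine h.congr_deriv ?_
  have e1 : k ^ (2+2*p-1) = k^(2*p) * k := by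
    rw [show 2+2*p-1 = 2*p + 1 by ring, rpow_add hk, rpow_one]
  have e2 : k ^ (2*p-1) = k^(2*p-2) * k := by
    rw [show 2*p-1 = (2*p-2) + 1 by ring, rpow_add hk, rpow_one]
  simp only [mm]
  rw [e1, e2]
  push_cast
  ring

lemma phi_one (p : ℝ) : phi p 1 = 0 := by simp [phi]

lemma cont_phi (p : ℝ) : ContinuousOn (phi p) (Ioc 0 1) := by
  intro x hx
  have h1 : ContinuousAt (fun y : ℝ => y ^ (2+2*p)) x :=
    Real.continuousAt_rpow_const x _ (Or.inl hx.1.ne')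
  have h2 : ContinuousAt (fun y : ℝ => y ^ (2*p)) x :=
    Real.continuousAt_rpow_const x _ (Or.inl hx.1.ne')
  exact ((continuousAt_const.mul (continuousAt_const.sub h1)).sub
    (continuousAt_const.mul (h2.sub (continuous_pow 2).continuousAt))).continuousWithinAt

lemma phi_pos {p : ℝ} (hp0 : 0 < p) (hp1 : p < 1) {k : ℝ} (hk : k ∈ Ioo (0:ℝ) 1) :
    0 < phi p k := by
  have anti : StrictAntiOn (phi p) (Ioc 0 1) := by
    apply strictAntiOn_of_deriv_neg (convex_Ioc 0 1) (cont_phi p)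
    intro x hx
    rw [interior_Ioc] at hx
    rw [(hasDerivAt_phi p hx.1).deriv]
    have := mm_gt_one hp0 hp1 hx
    have hpos : (0:ℝ) < 2*(1+p)*x := mul_pos (by linarith) hx.1
    exact mul_neg_of_pos_of_neg hpos (by linarith)
  have := anti (mem_Ioc.2 ⟨hk.1, hk.2.le⟩) (mem_Ioc.2 ⟨one_pos, le_refl 1⟩) hk.2
  rwa [phi_one] at this

lemma phi_neg {p : ℝ} (hp1 : 1 < p) {k : ℝ} (hk : k ∈ Ioo (0:ℝ) 1) :
    phi p k < 0 := by
  have mono : StrictMonoOn (phi p) (Ioc 0 1) := by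
    apply strictMonoOn_of_deriv_pos (convex_Ioc 0 1) (cont_phi p)
    intro x hx
    rw [interior_Ioc] at hx
    rw [(hasDerivAt_phi p hx.1).deriv]
    have := mm_lt_one hp1 hx
    have hpos : (0:ℝ) < 2*(1+p)*x := mul_pos (by linarith) hx.1
    exact mul_pos hpos (by linarith)
  have := mono (mem_Ioc.2 ⟨hk.1, hk.2.le⟩) (mem_Ioc.2 ⟨one_pos, le_refl 1⟩) hk.2
  rwa [phi_one] at this

lemma one_sub_sq_pos {k : ℝ} (hk : k ∈ Ioo (0:ℝ) 1) : 0 < 1 - k ^ 2 := by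
  nlinarith [hk.1, hk.2]

lemma hasDerivAt_G (p : ℝ) {k : ℝ} (hk : k ∈ Ioo (0:ℝ) 1) :
    HasDerivAt (G p) (k ^ (-p) * phi p k / (1 - k ^ 2) ^ 2) k := by
  have hk0 := hk.1
  have hu1 := Real.hasDerivAt_rpow_const (x := k) (p := 1-p) (Or.inl hk0.ne')
  have hu2 := Real.hasDerivAt_rpow_const (x := k) (p := 1+p) (Or.inl hk0.ne')
  have hu := hu1.sub hu2
  have hv : HasDerivAt (fun k : ℝ => 1 - k ^ 2) (-(2*k)) k := by
    simpa using (hasDerivAt_pow 2 k).const_sub 1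
  have hD : (1 - k ^ 2) ≠ 0 := (one_sub_sq_pos hk).ne'
  have h := hu.div hv hD
  refine h.congr_deriv ?_
  have hA : (0:ℝ) < k ^ p := rpow_pos_of_pos hk0 p
  have h1 : k ^ (1-p) = k * (k^p)⁻¹ := by
    rw [show (1-p) = 1 + -p by ring, rpow_add hk0, rpow_one, rpow_neg hk0.le]
  have h2 : k ^ (1+p) = k * k^p := by rw [rpow_add hk0, rpow_one]
  have h3 : k ^ (2*p) = k^p * k^p := by rw [show 2*p = p + p by ring, rpow_add hk0]
  have h4 : k ^ (2+2*p) = k^2 * (k^p * k^p) := by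
    rw [show 2+2*p = (2:ℝ) + (p+p) by ring, rpow_add hk0, rpow_add hk0, two_rpow]
  have h5 : k ^ (-p) = (k^p)⁻¹ := rpow_neg hk0.le p
  have h6 : k ^ (1-p-1) = (k^p)⁻¹ := by rw [show 1-p-1 = -p by ring, h5]
  have h7 : k ^ (1+p-1) = k^p := by norm_num
  simp only [phi, Pi.sub_apply]
  rw [h1, h2, h3, h4, h5, h6, h7]
  field_simp
  ring

lemma cont_G (p : ℝ) {k : ℝ} (hk : k ∈ Ioo (0:ℝ) 1) : ContinuousAt (G p) k :=
  (hasDerivAt_G p hk).continuousAt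

lemma G_strictMonoOn {p : ℝ} (hp0 : 0 < p) (hp1 : p < 1) :
    StrictMonoOn (G p) (Ioo 0 1) := by
  apply strictMonoOn_of_deriv_pos (convex_Ioo 0 1)
    (fun x hx => (cont_G p hx).continuousWithinAt)
  intro x hx
  rw [interior_Ioo] at hx
  rw [(hasDerivAt_G p hx).deriv]
  have h1 : (0:ℝ) < x ^ (-p) := rpow_pos_of_pos hx.1 _
  have h2 := phi_pos hp0 hp1 hx
  have h3 := one_sub_sq_pos hx
  positivity

lemma G_strictAntiOn {p : ℝ} (hp1 : 1 < p) :
    StrictAntiOn (G p) (Ioo 0 1) := by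
  apply strictAntiOn_of_deriv_neg (convex_Ioo 0 1)
    (fun x hx => (cont_G p hx).continuousWithinAt)
  intro x hx
  rw [interior_Ioo] at hx
  rw [(hasDerivAt_G p hx).deriv]
  have h1 : (0:ℝ) < x ^ (-p) := rpow_pos_of_pos hx.1 _
  have h2 := phi_neg hp1 hx
  have h3 := one_sub_sq_pos hx
  have : (0:ℝ) < (1 - x^2)^2 := by positivity
  exact div_neg_of_neg_of_pos (mul_neg_of_pos_of_neg h1 h2) this

lemma tendsto_G_one (p : ℝ) : Tendsto (G p) (𝓝[<] (1:ℝ)) (𝓝 p) := by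
  set N : ℝ → ℝ := fun k => k ^ (1-p) - k ^ (1+p) with hN_def
  set D : ℝ → ℝ := fun k => 1 - k ^ 2 with hD_def
  have hN : HasDerivAt N (-(2*p)) 1 := by
    have h1 := Real.hasDerivAt_rpow_const (x := (1:ℝ)) (p := 1-p) (Or.inl one_ne_zero)
    have h2 := Real.hasDerivAt_rpow_const (x := (1:ℝ)) (p := 1+p) (Or.inl one_ne_zero)
    have := h1.sub h2
    refine this.congr_deriv ?_
    simp [Real.one_rpow]
    ring
  have hD : HasDerivAt D (-2) 1 := by
    have : HasDerivAt D (-(2*1)) 1 := by simpa using (hasDerivAt_pow 2 (1:ℝ)).const_sub 1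
    simpa using this
  have hle : 𝓝[<] (1:ℝ) ≤ 𝓝[≠] (1:ℝ) :=
    nhdsWithin_mono _ (fun x hx => ne_of_lt hx)
  have t1 := (hasDerivAt_iff_tendsto_slope.mp hN).mono_left hle
  have t2 := (hasDerivAt_iff_tendsto_slope.mp hD).mono_left hle
  have hq : Tendsto (fun k => slope N 1 k / slope D 1 k) (𝓝[<] (1:ℝ)) (𝓝 (-(2*p) / -2)) :=
    t1.div t2 (by norm_num)
  have heq : ∀ᶠ k in 𝓝[<] (1:ℝ), slope N 1 k / slope D 1 k = G p k := by
    filter_upwards [Ioo_mem_nhdsLT_of_mem (show (1:ℝ) ∈ Ioc (0:ℝ) 1 by norm_num)] with k hk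
    have hk1 : k - 1 ≠ 0 := sub_ne_zero.2 (ne_of_lt hk.2)
    have hD0 : D k ≠ 0 := (one_sub_sq_pos hk).ne'
    have hN1 : N 1 = 0 := by simp [hN_def]
    have hD1 : D 1 = 0 := by simp [hD_def]
    rw [slope_def_field, slope_def_field, hN1, hD1, sub_zero, sub_zero]
    rw [div_div_div_cancel_right₀]
    · rfl
    · exact hk1
  have := hq.congr' heq
  convert this using 2
  norm_num

lemma tendsto_G_zero_lt {p : ℝ} (hp0 : 0 < p) (hp1 : p < 1) :
    Tendsto (G p) (𝓝[>] (0:ℝ)) (𝓝 0) := by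
  have l1 : Tendsto (fun k : ℝ => k ^ (1-p)) (𝓝[>] (0:ℝ)) (𝓝 0) := by
    have := (Real.continuousAt_rpow_const 0 (1-p) (Or.inr (by linarith))).tendsto
    rw [Real.zero_rpow (by linarith : (1:ℝ)-p ≠ 0)] at this
    exact this.mono_left nhdsWithin_le_nhds
  have l2 : Tendsto (fun k : ℝ => k ^ (1+p)) (𝓝[>] (0:ℝ)) (𝓝 0) := by
    have := (Real.continuousAt_rpow_const 0 (1+p) (Or.inr (by linarith))).tendsto
    rw [Real.zero_rpow (by linarith : (1:ℝ)+p ≠ 0)] at this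
    exact this.mono_left nhdsWithin_le_nhds
  have l3 : Tendsto (fun k : ℝ => 1 - k ^ 2) (𝓝[>] (0:ℝ)) (𝓝 1) := by
    have : Tendsto (fun k : ℝ => 1 - k ^ 2) (𝓝 (0:ℝ)) (𝓝 (1 - 0^2)) :=
      (continuous_const.sub (continuous_pow 2)).tendsto 0
    norm_num at this
    exact this.mono_left nhdsWithin_le_nhds
  have := ((l1.sub l2).div l3 one_ne_zero)
  simp at this; exact this

lemma G_eventually_gt {p : ℝ} (hp1 : 1 < p) (b : ℝ) :
    ∀ᶠ k in 𝓝[>] (0:ℝ), b < G p k := by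
  have l1 : Tendsto (fun k : ℝ => k ^ (1-p)) (𝓝[>] (0:ℝ)) atTop := by
    have h := (tendsto_rpow_atTop (show (0:ℝ) < p - 1 by linarith)).comp
      tendsto_inv_nhdsGT_zero
    apply h.congr'
    filter_upwards [self_mem_nhdsWithin] with k (hk : (0:ℝ) < k)
    show (k⁻¹) ^ (p-1) = k ^ (1-p)
    rw [Real.inv_rpow hk.le, ← Real.rpow_neg hk.le, show -(p-1) = 1-p by ring]
  filter_upwards [l1.eventually_gt_atTop (b + 1),
    Ioo_mem_nhdsGT_of_mem (show (0:ℝ) ∈ Ico (0:ℝ) 1 by norm_num)] with k hk1 hk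
  have h2 : k ^ (1+p) ≤ 1 := by
    apply Real.rpow_le_one hk.1.le hk.2.le (by linarith)
  have hnum : b + 1 - 1 < k ^ (1-p) - k ^ (1+p) := by linarith
  have hden := one_sub_sq_pos hk
  have hden1 : 1 - k ^ 2 ≤ 1 := by nlinarith [hk.1]
  have hnum0 : 0 ≤ k ^ (1-p) - k ^ (1+p) := by
    have : (1:ℝ) ≤ k ^ (1-p) :=
      Real.one_le_rpow_of_pos_of_le_one_of_nonpos hk.1 hk.2.le (by linarith)
    linarith
  have : k ^ (1-p) - k ^ (1+p) ≤ G p k := le_div_self hnum0 hden hden1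
  simp only [G] at this ⊢
  linarith

lemma G_exists_unique {p b : ℝ}
    (h : (p < 1 ∧ 0 < b ∧ b < p) ∨ (1 < p ∧ p < b)) :
    ∃! k : ℝ, k ∈ Ioo (0:ℝ) 1 ∧ G p k = b := by
  have hmem1 : ∀ᶠ k in 𝓝[<] (1:ℝ), k ∈ Ioo (0:ℝ) 1 :=
    eventually_mem_set.2 (Ioo_mem_nhdsLT_of_mem (by norm_num))
  rcases h with ⟨hp1, hb0, hbp⟩ | ⟨hp1, hbp⟩
  · have hp0 : 0 < p := lt_trans hb0 hbp
    obtain ⟨k₂, hk₂b, hk₂⟩ := (((tendsto_G_one p).eventually_const_lt hbp).and hmem1).exists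
    have hmem0 : ∀ᶠ k in 𝓝[>] (0:ℝ), k ∈ Ioo (0:ℝ) k₂ :=
      eventually_mem_set.2 (Ioo_mem_nhdsGT_of_mem ⟨le_refl 0, hk₂.1⟩)
    have hlt : ∀ᶠ k in 𝓝[>] (0:ℝ), G p k < b :=
      (tendsto_G_zero_lt hp0 hp1).eventually_lt_const hb0
    obtain ⟨k₁, hk₁b, hk₁⟩ := (hlt.and hmem0).exists
    have hsub : Icc k₁ k₂ ⊆ Ioo (0:ℝ) 1 :=
      fun x hx => ⟨lt_of_lt_of_le hk₁.1 hx.1, lt_of_le_of_lt hx.2 hk₂.2⟩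
    have hcont : ContinuousOn (G p) (Icc k₁ k₂) :=
      fun x hx => (cont_G p (hsub hx)).continuousWithinAt
    obtain ⟨c, hc, hGc⟩ := intermediate_value_Ioo hk₁.2.le hcont ⟨hk₁b, hk₂b⟩
    have hcmem : c ∈ Ioo (0:ℝ) 1 := hsub ⟨hc.1.le, hc.2.le⟩
    refine ⟨c, ⟨hcmem, hGc⟩, ?_⟩
    rintro y ⟨hy, hGy⟩
    exact (G_strictMonoOn hp0 hp1).injOn hy hcmem (hGy.trans hGc.symm)
  · obtain ⟨k₂, hk₂b, hk₂⟩ := (((tendsto_G_one p).eventually_lt_const hbp).and hmem1).exists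
    have hmem0 : ∀ᶠ k in 𝓝[>] (0:ℝ), k ∈ Ioo (0:ℝ) k₂ :=
      eventually_mem_set.2 (Ioo_mem_nhdsGT_of_mem ⟨le_refl 0, hk₂.1⟩)
    obtain ⟨k₁, hk₁b, hk₁⟩ := ((G_eventually_gt hp1 b).and hmem0).exists
    have hsub : Icc k₁ k₂ ⊆ Ioo (0:ℝ) 1 :=
      fun x hx => ⟨lt_of_lt_of_le hk₁.1 hx.1, lt_of_le_of_lt hx.2 hk₂.2⟩
    have hcont : ContinuousOn (G p) (Icc k₁ k₂) :=
      fun x hx => (cont_G p (hsub hx)).continuousWithinAt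
    obtain ⟨c, hc, hGc⟩ := intermediate_value_Ioo' hk₁.2.le hcont ⟨hk₂b, hk₁b⟩
    have hcmem : c ∈ Ioo (0:ℝ) 1 := hsub ⟨hc.1.le, hc.2.le⟩
    refine ⟨c, ⟨hcmem, hGc⟩, ?_⟩
    rintro y ⟨hy, hGy⟩
    exact (G_strictAntiOn hp1).injOn hy hcmem (hGy.trans hGc.symm)

lemma psi_iff_G (b q : ℝ) {k : ℝ} (hk : k ∈ Ioo (0:ℝ) 1) :
    (1 + b * k ^ q - b * k ^ (q - 2) - k ^ (2 * q - 2) = 0) ↔ G (q - 1) k = b := by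
  have hk0 := hk.1
  have hC : (0:ℝ) < k ^ (2 - q) := rpow_pos_of_pos hk0 _
  have hD : (0:ℝ) < 1 - k ^ 2 := one_sub_sq_pos hk
  have key : (1 + b * k ^ q - b * k ^ (q - 2) - k ^ (2 * q - 2)) * k ^ (2 - q)
      = (k ^ (2 - q) - k ^ q) - b * (1 - k ^ 2) := by
    have e1 : k ^ q * k ^ (2 - q) = k ^ 2 := by
      rw [← rpow_add hk0, show q + (2 - q) = (2:ℝ) by ring, two_rpow]
    have e2 : k ^ (q - 2) * k ^ (2 - q) = 1 := by
      rw [← rpow_add hk0, show q - 2 + (2 - q) = (0:ℝ) by ring, rpow_zero]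
    have e3 : k ^ (2 * q - 2) * k ^ (2 - q) = k ^ q := by
      rw [← rpow_add hk0, show 2 * q - 2 + (2 - q) = q by ring]
    calc (1 + b * k ^ q - b * k ^ (q - 2) - k ^ (2 * q - 2)) * k ^ (2 - q)
        = k ^ (2 - q) + b * (k ^ q * k ^ (2 - q)) - b * (k ^ (q - 2) * k ^ (2 - q))
          - k ^ (2 * q - 2) * k ^ (2 - q) := by ring
      _ = _ := by rw [e1, e2, e3]; ring
  have hGform : G (q - 1) k = (k ^ (2 - q) - k ^ q) / (1 - k ^ 2) := by
    simp only [G]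
    rw [show 1 - (q - 1) = 2 - q by ring, show 1 + (q - 1) = q by ring]
  constructor
  · intro h0
    rw [hGform, div_eq_iff hD.ne']
    have := key
    rw [h0, zero_mul] at this
    linarith
  · intro hG
    rw [hGform, div_eq_iff hD.ne'] at hG
    have h0 : (1 + b * k ^ q - b * k ^ (q - 2) - k ^ (2 * q - 2)) * k ^ (2 - q) = 0 := by
      rw [key]; linarith
    exact (mul_eq_zero.1 h0).resolve_right hC.ne'

end PsiAux

/-- If `1 < q < 2, 0 < b < q-1` or `q > 2, b > q-1`, the function
`ψ(k) = 1 + b k^q − b k^{q−2} − k^{2q−2}` has exactly one zero in `(0,1)`. -/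
theorem psi_unique_zero (b q : ℝ)
    (h : (1 < q ∧ q < 2 ∧ 0 < b ∧ b < q - 1) ∨ (2 < q ∧ q - 1 < b)) :
    ∃! k : ℝ, k ∈ Set.Ioo (0:ℝ) 1 ∧
      1 + b * k ^ q - b * k ^ (q - 2) - k ^ (2 * q - 2) = 0 := by
  have h' : (q - 1 < 1 ∧ 0 < b ∧ b < q - 1) ∨ (1 < q - 1 ∧ q - 1 < b) := by
    rcases h with ⟨h1, h2, h3, h4⟩ | ⟨h1, h2⟩
    · exact Or.inl ⟨by linarith, h3, h4⟩
    · exact Or.inr ⟨by linarith, h2⟩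
  obtain ⟨c, ⟨hc, hGc⟩, huniq⟩ := PsiAux.G_exists_unique h'
  refine ⟨c, ⟨hc, (PsiAux.psi_iff_G b q hc).2 hGc⟩, ?_⟩
  rintro y ⟨hy, hpsi⟩
  exact huniq y ⟨hy, (PsiAux.psi_iff_G b q hy).1 hpsi⟩
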